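/- The bracket [·,·]_H satisfies the Leibniz rule with respect to the associative product of A: [u, vw]_H = [u,v]_H w + v[u,w]_H for all u, v, w ∈ A. Hence (A, ·, [·,·]_H) is a Poisson algebra. -/

import Mathlib

noncomputable section

open scoped BigOperators
open scoped Classical

variable (F : Type*) [Field F] [CharZero F]

/-- `J = J_1 × ⋯ × J_n` as an additive submonoid of `ℕ^n`. -/
def Jpi (n : ℕ) (Jp : Fin n → AddSubmonoid ℕ) : AddSubmonoid (Fin n → ℕ) :=
  AddSubmonoid.pi Set.univ Jp

lemma sub_single_mem {n : ℕ} {Jp : Fin n → AddSubmonoid ℕ}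
    (hJ : ∀ p, Jp p = ⊥ ∨ Jp p = ⊤) (i : Jpi n Jp) (p : Fin n)
    (h : (i : Fin n → ℕ) p ≠ 0) : ((i : Fin n → ℕ) - Pi.single p 1) ∈ Jpi n Jp := by
  have key : ∀ q : Fin n, (i : Fin n → ℕ) q - (Pi.single p 1 : Fin n → ℕ) q ∈ Jp q := by
    intro q
    rcases hJ q with hq | hq
    · have hiq : (i : Fin n → ℕ) q ∈ Jp q := i.2 q (Set.mem_univ q)
      rw [hq] at hiq
      simp only [AddSubmonoid.mem_bot] at hiq
      by_cases hpq : q = p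
      · subst hpq; exact absurd hiq h
      · rw [hq, AddSubmonoid.mem_bot]
        simp [Pi.single_eq_of_ne hpq, hiq]
    · rw [hq]; trivial
  intro q _
  exact key q

variable (k : ℕ) (Γ0 : Type*) [AddCommGroup Γ0]
  (Γ1 : AddSubgroup (Fin (2*k) → F)) (Jp : Fin (2*k) → AddSubmonoid ℕ)

/-- The semigroup algebra `A` of `Γ × J = (Γ_0 ⊕ Γ_1) × J` over `𝔽`. -/
abbrev AH : Type _ := AddMonoidAlgebra F (Γ0 × Γ1 × Jpi (2*k) Jp)

/-- The first half index `p ∈ {1,…,k}` inside `{1,…,2k}` (0-based). -/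
def idxA (p : Fin k) : Fin (2*k) := ⟨p, by have := p.isLt; omega⟩

/-- The second half index `k+p` inside `{1,…,2k}` (0-based). -/
def idxB (p : Fin k) : Fin (2*k) := ⟨k + p, by have := p.isLt; omega⟩

/-- The derivation `∂_p` of `A`, `∂_p(x^{ᾱ,i}) = α_p x^{ᾱ,i} + i_p x^{ᾱ,i-1_[p]}`. -/
def ddH (hJ : ∀ p, Jp p = ⊥ ∨ Jp p = ⊤) (p : Fin (2*k)) :
    Module.End F (AH F k Γ0 Γ1 Jp) :=
  (Finsupp.lsum F fun (g : Γ0 × Γ1 × Jpi (2*k) Jp) =>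
    ((g.2.1 : Fin (2*k) → F) p) • AddMonoidAlgebra.lsingle (R := F) g +
    (if h : (g.2.2 : Fin (2*k) → ℕ) p = 0 then 0 else
      (((g.2.2 : Fin (2*k) → ℕ) p : F)) • AddMonoidAlgebra.lsingle (R := F)
        (g.1, g.2.1,
          ⟨(g.2.2 : Fin (2*k) → ℕ) - Pi.single p 1, sub_single_mem hJ g.2.2 p h⟩)))
    ∘ₗ (AddMonoidAlgebra.coeffLinearEquiv F).toLinearMap

/-- `X_p(Γ_1) ≠ {0}`. -/
def XneH (q : Fin (2*k)) : Prop := ∃ v ∈ Γ1, v q ≠ 0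

/-- The radical of the skew-symmetric `ℤ`-bilinear form `φ` on `Γ = Γ_0 ⊕ Γ_1`. -/
def RadH (φ : (Γ0 × Γ1) →+ (Γ0 × Γ1) →+ F) : Set (Γ0 × Γ1) :=
  {a | ∀ b, φ a b = 0}

/-- The scalar `φ(ᾱ,β̄) − Σ_{p=k_1+1}^k (α_p β_{k+p} − α_{k+p} β_p)` attached to a pair
of basis monomials of `A`. -/
def coefH (φ : (Γ0 × Γ1) →+ (Γ0 × Γ1) →+ F) (k1 : ℕ)
    (g1 g2 : Γ0 × Γ1 × Jpi (2*k) Jp) : F :=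
  φ (g1.1, g1.2.1) (g2.1, g2.2.1) -
    ∑ p ∈ Finset.univ.filter (fun p : Fin k => k1 ≤ (p : ℕ)),
      ((g1.2.1 : Fin (2*k) → F) (idxA k p) * (g2.2.1 : Fin (2*k) → F) (idxB k p)
        - (g1.2.1 : Fin (2*k) → F) (idxB k p) * (g2.2.1 : Fin (2*k) → F) (idxA k p))

/-- The Hamiltonian bracket (4.21):
`[u,v]_H = Σ_{p=1}^k x^{σ_p,0}(∂_p(u)∂_{k+p}(v) − ∂_{k+p}(u)∂_p(v))
 + (φ(ᾱ,β̄) − Σ_{p=k_1+1}^k (α_p β_{k+p} − α_{k+p} β_p)) u v`,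
extended bilinearly from homogeneous components. -/
def brH (hJ : ∀ p, Jp p = ⊥ ∨ Jp p = ⊤) (φ : (Γ0 × Γ1) →+ (Γ0 × Γ1) →+ F) (k1 : ℕ)
    (σp : Fin k → Γ1) (u v : AH F k Γ0 Γ1 Jp) : AH F k Γ0 Γ1 Jp :=
  (∑ p : Fin k,
    (AddMonoidAlgebra.single ((0 : Γ0), σp p, (0 : Jpi (2*k) Jp)) (1 : F)) *
      (ddH F k Γ0 Γ1 Jp hJ (idxA k p) u * ddH F k Γ0 Γ1 Jp hJ (idxB k p) v
        - ddH F k Γ0 Γ1 Jp hJ (idxB k p) u * ddH F k Γ0 Γ1 Jp hJ (idxA k p) v))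
  + Finsupp.sum u.coeff (fun g1 c1 => Finsupp.sum v.coeff (fun g2 c2 =>
      AddMonoidAlgebra.single (g1 + g2) (coefH F k Γ0 Γ1 Jp φ k1 g1 g2 * (c1 * c2))))


/-! ### Auxiliary lemmas for the Leibniz rule -/

lemma jpi_sub_mem (hJ : ∀ p, Jp p = ⊥ ∨ Jp p = ⊤) (i : Jpi (2*k) Jp) (p : Fin (2*k)) :
    ((i : Fin (2*k) → ℕ) - Pi.single p 1) ∈ Jpi (2*k) Jp := by
  by_cases h : (i : Fin (2*k) → ℕ) p = 0
  · have heq : (i : Fin (2*k) → ℕ) - Pi.single p 1 = (i : Fin (2*k) → ℕ) := by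
      funext q
      by_cases hq : q = p
      · subst hq; simp [h]
      · simp [Pi.single_eq_of_ne hq]
    rw [heq]; exact i.2
  · exact sub_single_mem hJ i p h


lemma ddH_single (hJ : ∀ p, Jp p = ⊥ ∨ Jp p = ⊤) (p : Fin (2*k)) (a : Γ0) (b : Γ1)
    (i : Jpi (2*k) Jp) (c : F) :
    ddH F k Γ0 Γ1 Jp hJ p (AddMonoidAlgebra.single (a, b, i) c)
      = (b : Fin (2*k) → F) p • AddMonoidAlgebra.single (a, b, i) c
        + ((i : Fin (2*k) → ℕ) p : F) • AddMonoidAlgebra.single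
            (a, b, (⟨(i : Fin (2*k) → ℕ) - Pi.single p 1,
              jpi_sub_mem k Jp hJ i p⟩ : Jpi (2*k) Jp)) c := by
  rw [ddH]
  show (Finsupp.lsum F _) (Finsupp.single (a, b, i) c) = _
  rw [Finsupp.lsum_single]
  by_cases h : (i : Fin (2*k) → ℕ) p = 0
  · rw [dif_pos h, h]
    simp only [Nat.cast_zero, zero_smul, add_zero]
    rfl
  · rw [dif_neg h]
    rfl

set_option maxHeartbeats 1000000 in
lemma ddH_mul (hJ : ∀ p, Jp p = ⊥ ∨ Jp p = ⊤) (p : Fin (2*k)) (u v : AH F k Γ0 Γ1 Jp) :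
    ddH F k Γ0 Γ1 Jp hJ p (u * v)
      = ddH F k Γ0 Γ1 Jp hJ p u * v + u * ddH F k Γ0 Γ1 Jp hJ p v := by
  induction u using AddMonoidAlgebra.induction_linear with
  | zero => simp
  | add f g hf hg => simp only [add_mul, map_add, hf, hg]; ring
  | single g1 c1 =>
    induction v using AddMonoidAlgebra.induction_linear with
    | zero => simp
    | add f g hf hg => simp only [mul_add, map_add, hf, hg]; ring
    | single g2 c2 =>
      obtain ⟨a, b, i⟩ := g1
      obtain ⟨a', b', i'⟩ := g2
      rw [AddMonoidAlgebra.single_mul_single]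
      rw [show ((a, b, i) + (a', b', i') : Γ0 × Γ1 × Jpi (2*k) Jp)
            = (a + a', b + b', i + i') from rfl]
      rw [ddH_single, ddH_single, ddH_single]
      have vL : ∀ (_ : (i' : Fin (2*k) → ℕ) p = 0 ∨ (i : Fin (2*k) → ℕ) p ≠ 0),
          ((i : Fin (2*k) → ℕ) + (i' : Fin (2*k) → ℕ)) - Pi.single p 1
            = ((i : Fin (2*k) → ℕ) - Pi.single p 1) + (i' : Fin (2*k) → ℕ) := by
        intro hc
        funext q
        by_cases hq : q = p
        · subst hq
          simp only [Pi.sub_apply, Pi.add_apply, Pi.single_eq_same]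
          rcases hc with hc | hc <;> omega
        · simp [Pi.single_eq_of_ne hq]
      have vR : ∀ (_ : (i : Fin (2*k) → ℕ) p = 0 ∨ (i' : Fin (2*k) → ℕ) p ≠ 0),
          ((i : Fin (2*k) → ℕ) + (i' : Fin (2*k) → ℕ)) - Pi.single p 1
            = (i : Fin (2*k) → ℕ) + ((i' : Fin (2*k) → ℕ) - Pi.single p 1) := by
        intro hc
        funext q
        by_cases hq : q = p
        · subst hq
          simp only [Pi.sub_apply, Pi.add_apply, Pi.single_eq_same]
          rcases hc with hc | hc <;> omega
        · simp [Pi.single_eq_of_ne hq]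
      simp only [AddSubgroup.coe_add, AddSubmonoid.coe_add, Pi.add_apply, Nat.cast_add,
        add_mul, mul_add, smul_mul_assoc, mul_smul_comm,
        AddMonoidAlgebra.single_mul_single, Prod.mk_add_mk, add_smul]
      have memL : ((i : Fin (2*k) → ℕ) - Pi.single p 1) + (i' : Fin (2*k) → ℕ)
          ∈ Jpi (2*k) Jp := add_mem (jpi_sub_mem k Jp hJ i p) i'.2
      have memR : (i : Fin (2*k) → ℕ) + ((i' : Fin (2*k) → ℕ) - Pi.single p 1)
          ∈ Jpi (2*k) Jp := add_mem i.2 (jpi_sub_mem k Jp hJ i' p)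
      by_cases h : (i : Fin (2*k) → ℕ) p = 0 <;>
        by_cases h' : (i' : Fin (2*k) → ℕ) p = 0
      · rw [h, h']
        simp only [Nat.cast_zero, zero_smul, add_zero, zero_add]
      · have e1 : (⟨(i : Fin (2*k) → ℕ) + (i' : Fin (2*k) → ℕ) - Pi.single p 1,
            by rw [vR (Or.inl h)]; exact memR⟩ : Jpi (2*k) Jp)
            = i + ⟨(i' : Fin (2*k) → ℕ) - Pi.single p 1, jpi_sub_mem k Jp hJ i' p⟩ :=
          Subtype.ext (by rw [AddSubmonoid.coe_add]; exact vR (Or.inl h))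
        rw [e1, h]
        simp only [Nat.cast_zero, zero_smul, add_zero, zero_add]
        abel
      · have e1 : (⟨(i : Fin (2*k) → ℕ) + (i' : Fin (2*k) → ℕ) - Pi.single p 1,
            by rw [vL (Or.inl h')]; exact memL⟩ : Jpi (2*k) Jp)
            = (⟨(i : Fin (2*k) → ℕ) - Pi.single p 1, jpi_sub_mem k Jp hJ i p⟩
                : Jpi (2*k) Jp) + i' :=
          Subtype.ext (by rw [AddSubmonoid.coe_add]; exact vL (Or.inl h'))
        rw [e1, h']
        simp only [Nat.cast_zero, zero_smul, add_zero, zero_add]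
        abel
      · have e1 : (⟨(i : Fin (2*k) → ℕ) + (i' : Fin (2*k) → ℕ) - Pi.single p 1,
            by rw [vR (Or.inr h')]; exact memR⟩ : Jpi (2*k) Jp)
            = i + ⟨(i' : Fin (2*k) → ℕ) - Pi.single p 1, jpi_sub_mem k Jp hJ i' p⟩ :=
          Subtype.ext (by rw [AddSubmonoid.coe_add]; exact vR (Or.inr h'))
        have e2 : i + (⟨(i' : Fin (2*k) → ℕ) - Pi.single p 1,
              jpi_sub_mem k Jp hJ i' p⟩ : Jpi (2*k) Jp)
            = (⟨(i : Fin (2*k) → ℕ) - Pi.single p 1, jpi_sub_mem k Jp hJ i p⟩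
                : Jpi (2*k) Jp) + i' :=
          Subtype.ext (by
            rw [AddSubmonoid.coe_add, AddSubmonoid.coe_add, ← vR (Or.inr h'),
              vL (Or.inr h)])
        rw [e1]
        nth_rewrite 1 [e2]
        abel

lemma coefH_add_right (φ : (Γ0 × Γ1) →+ (Γ0 × Γ1) →+ F) (k1 : ℕ)
    (g1 g2 g3 : Γ0 × Γ1 × Jpi (2*k) Jp) :
    coefH F k Γ0 Γ1 Jp φ k1 g1 (g2 + g3)
      = coefH F k Γ0 Γ1 Jp φ k1 g1 g2 + coefH F k Γ0 Γ1 Jp φ k1 g1 g3 := by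
  obtain ⟨a1, b1, i1⟩ := g1
  obtain ⟨a2, b2, i2⟩ := g2
  obtain ⟨a3, b3, i3⟩ := g3
  unfold coefH
  simp only [Prod.mk_add_mk, Prod.fst_add, Prod.snd_add]
  rw [show ((a2 + a3 : Γ0), (b2 + b3 : Γ1)) = ((a2, b2) : Γ0 × Γ1) + (a3, b3) from rfl]
  rw [map_add]
  simp only [AddMonoidHom.add_apply, AddSubgroup.coe_add, Pi.add_apply]
  rw [sub_add_sub_comm, ← Finset.sum_add_distrib]
  congr 1
  exact Finset.sum_congr rfl fun p _ => by ring

/-- The second (φ-)part of the bracket. -/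
def TmapH (φ : (Γ0 × Γ1) →+ (Γ0 × Γ1) →+ F) (k1 : ℕ) (u v : AH F k Γ0 Γ1 Jp) :
    AH F k Γ0 Γ1 Jp :=
  Finsupp.sum u.coeff (fun g1 c1 => Finsupp.sum v.coeff (fun g2 c2 =>
      AddMonoidAlgebra.single (g1 + g2) (coefH F k Γ0 Γ1 Jp φ k1 g1 g2 * (c1 * c2))))

lemma TmapH_add_right (φ : (Γ0 × Γ1) →+ (Γ0 × Γ1) →+ F) (k1 : ℕ)
    (u v w : AH F k Γ0 Γ1 Jp) :
    TmapH F k Γ0 Γ1 Jp φ k1 u (v + w)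
      = TmapH F k Γ0 Γ1 Jp φ k1 u v + TmapH F k Γ0 Γ1 Jp φ k1 u w := by
  unfold TmapH
  rw [← Finsupp.sum_add]
  refine Finsupp.sum_congr fun g1 _ => ?_
  rw [AddMonoidAlgebra.coeff_add, Finsupp.sum_add_index' (fun a => by simp) (fun a b1 b2 => by rw [mul_add, mul_add,
    AddMonoidAlgebra.single_add])]

lemma TmapH_single_right (φ : (Γ0 × Γ1) →+ (Γ0 × Γ1) →+ F) (k1 : ℕ)
    (u : AH F k Γ0 Γ1 Jp) (g2 : Γ0 × Γ1 × Jpi (2*k) Jp) (c2 : F) :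
    TmapH F k Γ0 Γ1 Jp φ k1 u (AddMonoidAlgebra.single g2 c2)
      = Finsupp.sum u.coeff (fun g1 c1 =>
          AddMonoidAlgebra.single (g1 + g2) (coefH F k Γ0 Γ1 Jp φ k1 g1 g2 * (c1 * c2))) := by
  unfold TmapH
  refine Finsupp.sum_congr fun g1 _ => ?_
  rw [AddMonoidAlgebra.coeff_single, Finsupp.sum_single_index (by simp)]

lemma TmapH_mul (φ : (Γ0 × Γ1) →+ (Γ0 × Γ1) →+ F) (k1 : ℕ)
    (u v w : AH F k Γ0 Γ1 Jp) :
    TmapH F k Γ0 Γ1 Jp φ k1 u (v * w)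
      = TmapH F k Γ0 Γ1 Jp φ k1 u v * w + v * TmapH F k Γ0 Γ1 Jp φ k1 u w := by
  induction v using AddMonoidAlgebra.induction_linear with
  | zero => simp [TmapH]
  | add f g hf hg =>
      rw [add_mul, TmapH_add_right, TmapH_add_right, hf, hg, add_mul]
      ring
  | single g2 c2 =>
    induction w using AddMonoidAlgebra.induction_linear with
    | zero => simp [TmapH]
    | add f g hf hg =>
        rw [mul_add, TmapH_add_right, TmapH_add_right, hf, hg, mul_add]
        ring
    | single g3 c3 =>
      rw [AddMonoidAlgebra.single_mul_single, TmapH_single_right, TmapH_single_right,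
        TmapH_single_right, Finsupp.sum_mul, Finsupp.mul_sum, ← Finsupp.sum_add]
      refine Finsupp.sum_congr fun g1 _ => ?_
      rw [AddMonoidAlgebra.single_mul_single, AddMonoidAlgebra.single_mul_single,
        coefH_add_right, add_mul, AddMonoidAlgebra.single_add]
      congr 1
      · congr 1
        · abel
        · ring
      · congr 1
        · abel
        · ring

/-- The first (derivation) part of the bracket. -/
def SmapH (hJ : ∀ p, Jp p = ⊥ ∨ Jp p = ⊤) (σp : Fin k → Γ1) (u v : AH F k Γ0 Γ1 Jp) :
    AH F k Γ0 Γ1 Jp :=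
  ∑ p : Fin k,
    (AddMonoidAlgebra.single ((0 : Γ0), σp p, (0 : Jpi (2*k) Jp)) (1 : F)) *
      (ddH F k Γ0 Γ1 Jp hJ (idxA k p) u * ddH F k Γ0 Γ1 Jp hJ (idxB k p) v
        - ddH F k Γ0 Γ1 Jp hJ (idxB k p) u * ddH F k Γ0 Γ1 Jp hJ (idxA k p) v)

lemma SmapH_mul (hJ : ∀ p, Jp p = ⊥ ∨ Jp p = ⊤) (σp : Fin k → Γ1)
    (u v w : AH F k Γ0 Γ1 Jp) :
    SmapH F k Γ0 Γ1 Jp hJ σp u (v * w)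
      = SmapH F k Γ0 Γ1 Jp hJ σp u v * w + v * SmapH F k Γ0 Γ1 Jp hJ σp u w := by
  unfold SmapH
  rw [Finset.sum_mul, Finset.mul_sum, ← Finset.sum_add_distrib]
  refine Finset.sum_congr rfl fun p _ => ?_
  rw [ddH_mul F k Γ0 Γ1 Jp hJ (idxA k p) v w, ddH_mul F k Γ0 Γ1 Jp hJ (idxB k p) v w]
  ring

lemma brH_eq (hJ : ∀ p, Jp p = ⊥ ∨ Jp p = ⊤) (φ : (Γ0 × Γ1) →+ (Γ0 × Γ1) →+ F)
    (k1 : ℕ) (σp : Fin k → Γ1) (u v : AH F k Γ0 Γ1 Jp) :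
    brH F k Γ0 Γ1 Jp hJ φ k1 σp u v
      = SmapH F k Γ0 Γ1 Jp hJ σp u v + TmapH F k Γ0 Γ1 Jp φ k1 u v := rfl

/-- the Hamiltonian bracket `[·,·]_H` satisfies the Leibniz rule with
respect to the associative product of `A`:  `[u,vw]_H = [u,v]_H w + v [u,w]_H` for all
`u,v,w ∈ A`.  Hence `(A, ·, [·,·]_H)` is a Poisson algebra. -/
theorem brH_leibniz (hk : 0 < k)
    (hJ : ∀ p, Jp p = ⊥ ∨ Jp p = ⊤)
    -- `X_p(Γ_1) + J_p ≠ {0}` (4.5)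
    (hne : ∀ q : Fin (2*k), XneH F k Γ1 q ∨ Jp q ≠ ⊥)
    -- `Γ_0` is torsion-free
    (hTF : ∀ (m : ℕ) (x : Γ0), m ≠ 0 → m • x = 0 → x = 0)
    (k1 : ℕ) (hk1 : k1 ≤ k)
    (h413 : ∀ p : Fin k, (p : ℕ) < k1 → XneH F k Γ1 (idxA k p) ∨ XneH F k Γ1 (idxB k p))
    (φ : (Γ0 × Γ1) →+ (Γ0 × Γ1) →+ F)
    (hφskew : ∀ a b : Γ0 × Γ1, φ a b = - φ b a)
    -- (4.16)
    (h416 : ∀ q : Fin (2*k), ((k1 ≤ (q:ℕ) ∧ (q:ℕ) < k) ∨ (k + k1 ≤ (q:ℕ))) →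
      XneH F k Γ1 q → Pi.single q (1:F) ∈ Γ1)
    -- (4.17)
    (h417 : ∀ q : Fin (2*k), ((q:ℕ) < k1 ∨ (k ≤ (q:ℕ) ∧ (q:ℕ) < k + k1)) →
      XneH F k Γ1 q →
      ∃ h : Pi.single q (1:F) ∈ Γ1,
        ((0 : Γ0), (⟨Pi.single q (1:F), h⟩ : Γ1)) ∈ RadH F k Γ0 Γ1 φ)
    -- choice of the `σ_p` (4.18)
    (σp : Fin k → Γ1)
    (hσ1 : ∀ p : Fin k, (p:ℕ) < k1 → σp p ≠ 0 ∧
      ((0 : Γ0), σp p) ∈ RadH F k Γ0 Γ1 φ ∧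
      ((σp p : Fin (2*k) → F)) ∈
        Submodule.span F {Pi.single (idxA k p) (1:F), Pi.single (idxB k p) (1:F)})
    (hσ2 : ∀ p : Fin k, k1 ≤ (p:ℕ) → σp p = 0) :
    ∀ u v w : AH F k Γ0 Γ1 Jp,
      brH F k Γ0 Γ1 Jp hJ φ k1 σp u (v * w)
        = brH F k Γ0 Γ1 Jp hJ φ k1 σp u v * w + v * brH F k Γ0 Γ1 Jp hJ φ k1 σp u w := by
  intro u v w
  simp only [brH_eq F k Γ0 Γ1 Jp hJ φ k1 σp]
  rw [SmapH_mul F k Γ0 Γ1 Jp hJ σp u v w, TmapH_mul F k Γ0 Γ1 Jp φ k1 u v w]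
  ring
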